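/- Let π₁, π₂ : A → ℂ* be one-dimensional representations of a finite abelian group A and f ∈ Aut(A) of order 2. Fix a ∈ A. If π₁(a) + π₁(f(a)) = π₂(a) + π₂(f(a)), then π₁(f(a)a⁻¹) = conj(π₂(f(a)a⁻¹)) or π₁(f(a)a⁻¹) = π₂(f(a)a⁻¹). -/

import Mathlib

lemma aux_abs_one {A : Type*} [CommGroup A] [Fintype A] (π : A →* ℂˣ) (x : A) :
    ‖((π x : ℂˣ) : ℂ)‖ = 1 := by
  have h : ((π x : ℂˣ) : ℂ) ^ Fintype.card A = 1 := by
    rw [← Units.val_pow_eq_pow_val, ← map_pow, pow_card_eq_one, map_one, Units.val_one]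
  simpa using
    Complex.norm_eq_one_of_pow_eq_one h Fintype.card_ne_zero

/-- If `π₁(a) + π₁(f(a)) = π₂(a) + π₂(f(a))` for a fixed `a`, then
`π₁(f(a)a⁻¹) = conj(π₂(f(a)a⁻¹))` or `π₁(f(a)a⁻¹) = π₂(f(a)a⁻¹)`. -/
theorem stmt_5 {A : Type*} [CommGroup A] [Fintype A]
    (f : A ≃* A) (hf2 : ∀ b : A, f (f b) = b)
    (π₁ π₂ : A →* ℂˣ) (a : A)
    (h : (π₁ a : ℂ) + (π₁ (f a) : ℂ) = (π₂ a : ℂ) + (π₂ (f a) : ℂ)) :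
    (π₁ (f a * a⁻¹) : ℂ) = (starRingEnd ℂ) (π₂ (f a * a⁻¹) : ℂ) ∨
      (π₁ (f a * a⁻¹) : ℂ) = (π₂ (f a * a⁻¹) : ℂ) := by
  set z₁ : ℂ := (π₁ (f a * a⁻¹) : ℂ) with hz₁def
  set z₂ : ℂ := (π₂ (f a * a⁻¹) : ℂ) with hz₂def
  have hz1 : ‖z₁‖ = 1 := aux_abs_one π₁ _
  have hz2 : ‖z₂‖ = 1 := aux_abs_one π₂ _
  have ha1 : ‖((π₁ a : ℂ))‖ = 1 := aux_abs_one π₁ _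
  have ha2 : ‖((π₂ a : ℂ))‖ = 1 := aux_abs_one π₂ _
  have e1 : z₁ * (π₁ a : ℂ) = (π₁ (f a) : ℂ) := by
    rw [hz₁def, ← Units.val_mul, ← map_mul, inv_mul_cancel_right]
  have e2 : z₂ * (π₂ a : ℂ) = (π₂ (f a) : ℂ) := by
    rw [hz₂def, ← Units.val_mul, ← map_mul, inv_mul_cancel_right]
  have key : ‖1 + z₁‖ = ‖1 + z₂‖ := by
    have E : (π₁ a : ℂ) * (1 + z₁) = (π₂ a : ℂ) * (1 + z₂) := by
      linear_combination h + e1 - e2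
    have := congrArg (‖·‖) E
    simpa [norm_mul, ha1, ha2] using this
  have hn1 : Complex.normSq z₁ = 1 := by
    rw [← Complex.sq_norm, hz1]; norm_num
  have hn2 : Complex.normSq z₂ = 1 := by
    rw [← Complex.sq_norm, hz2]; norm_num
  have hkey : Complex.normSq (1 + z₁) = Complex.normSq (1 + z₂) := by
    rw [← Complex.sq_norm, ← Complex.sq_norm, key]
  rw [Complex.normSq_apply] at hn1 hn2
  simp only [Complex.normSq_apply, Complex.add_re, Complex.add_im, Complex.one_re,
    Complex.one_im] at hkey
  have hre : z₁.re = z₂.re := by nlinarith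
  have him : z₁.im ^ 2 = z₂.im ^ 2 := by nlinarith
  rcases sq_eq_sq_iff_eq_or_eq_neg.mp him with h' | h'
  · right; exact Complex.ext hre h'
  · left
    apply Complex.ext
    · simp [Complex.conj_re, hre]
    · simp [Complex.conj_im, h']
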